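/- Let μ be a probability measure supported in [0,1] with |μ̂(ξ)| ≤ C(1+|ξ|)^{-β} for all ξ ∈ ℝ, for some C < ∞ and some β > 1/4, and let f be a Schwartz function on ℝ³ whose Fourier transform has compact support. Then the function F^{[f]}(s,t) = ∫_{ℝ⁴} μ̂(ξ) ∏_{i=1}^{3} μ̂(η_i) · f̂(−η₁ − (s/(1−t))ξ, −η₂ − ((1−s)/(1−t))ξ, −η₃ + (t/(1−t))ξ) dξ dη₁ dη₂ dη₃ is continuous on (0,1)². -/

import Mathlib

open MeasureTheory

/-- Fourier transform of a finite Borel measure on ℝ: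
`μ̂(ξ) = ∫ e^{-2πiξx} dμ(x)`. -/
noncomputable def ftM (μ : Measure ℝ) (ξ : ℝ) : ℂ :=
  ∫ x, Complex.exp (((-(2 * Real.pi * ξ * x) : ℝ) : ℂ) * Complex.I) ∂μ

/-- Fourier transform on ℝ³ (identified with `ℝ × ℝ × ℝ`):
`ĝ(ξ) = ∫_{ℝ³} e^{-2πi ξ·x} g(x) dx`. -/
noncomputable def ft3 (g : ℝ × ℝ × ℝ → ℂ) (ξ : ℝ × ℝ × ℝ) : ℂ :=
  ∫ x : ℝ × ℝ × ℝ,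
    Complex.exp (((-(2 * Real.pi * (ξ.1 * x.1 + ξ.2.1 * x.2.1 + ξ.2.2 * x.2.2)) : ℝ) : ℂ)
      * Complex.I) * g x

namespace Stmt10Aux

instance : (volume : Measure (ℝ × ℝ × ℝ)).IsAddHaarMeasure := by
  rw [Measure.volume_eq_prod, Measure.volume_eq_prod]
  exact Measure.prod.instIsAddHaarMeasure _ _

lemma mp_translate (v : ℝ × ℝ × ℝ) :
    MeasurePreserving (fun y : ℝ × ℝ × ℝ => y + v) volume volume := by
  have h : MeasurePreserving
      (Prod.map (fun x : ℝ => x + v.1)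
        (Prod.map (fun x : ℝ => x + v.2.1) (fun x : ℝ => x + v.2.2)))
      ((volume : Measure ℝ).prod ((volume : Measure ℝ).prod (volume : Measure ℝ)))
      ((volume : Measure ℝ).prod ((volume : Measure ℝ).prod (volume : Measure ℝ))) :=
    (measurePreserving_add_right volume v.1).prod
      ((measurePreserving_add_right volume v.2.1).prod
        (measurePreserving_add_right volume v.2.2))
  have e : (fun y : ℝ × ℝ × ℝ => y + v) = Prod.map (fun x : ℝ => x + v.1)
      (Prod.map (fun x : ℝ => x + v.2.1) (fun x : ℝ => x + v.2.2)) := rfl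
  rw [e]
  simpa [← Measure.volume_eq_prod] using h

noncomputable def shearEquiv (a b c : ℝ) : (ℝ × ℝ × ℝ × ℝ) ≃ᵐ (ℝ × ℝ × ℝ × ℝ) where
  toFun p := (p.1, p.2.1 + a * p.1, p.2.2.1 + b * p.1, p.2.2.2 + c * p.1)
  invFun p := (p.1, p.2.1 - a * p.1, p.2.2.1 - b * p.1, p.2.2.2 - c * p.1)
  left_inv p := by
    obtain ⟨x, y, z, w⟩ := p; simp only [Prod.mk.injEq]
    refine ⟨trivial, by ring, by ring, by ring⟩
  right_inv p := by
    obtain ⟨x, y, z, w⟩ := p; simp only [Prod.mk.injEq]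
    refine ⟨trivial, by ring, by ring, by ring⟩
  measurable_toFun := by
    show Measurable fun p : ℝ × ℝ × ℝ × ℝ =>
      (p.1, p.2.1 + a * p.1, p.2.2.1 + b * p.1, p.2.2.2 + c * p.1)
    fun_prop
  measurable_invFun := by
    show Measurable fun p : ℝ × ℝ × ℝ × ℝ =>
      (p.1, p.2.1 - a * p.1, p.2.2.1 - b * p.1, p.2.2.2 - c * p.1)
    fun_prop

lemma shear_mp (a b c : ℝ) :
    MeasurePreserving (shearEquiv a b c) (volume : Measure (ℝ × ℝ × ℝ × ℝ)) volume := by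
  have h := MeasurePreserving.skew_product (f := @id ℝ)
    (MeasurePreserving.id (volume : Measure ℝ))
    (g := fun x (y : ℝ × ℝ × ℝ) => y + (a * x, b * x, c * x))
    (by fun_prop)
    (Filter.Eventually.of_forall fun x => (mp_translate (a * x, b * x, c * x)).map_eq)
  have e : (fun p : ℝ × (ℝ × ℝ × ℝ) => (id p.1, p.2 + (a * p.1, b * p.1, c * p.1)))
      = ⇑(shearEquiv a b c) := rfl
  rw [e] at h
  simpa [← Measure.volume_eq_prod] using h

lemma integral_shear (a b c : ℝ) (G : ℝ × ℝ × ℝ × ℝ → ℂ) :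
    (∫ p : ℝ × ℝ × ℝ × ℝ,
      G (p.1, p.2.1 + a * p.1, p.2.2.1 + b * p.1, p.2.2.2 + c * p.1))
      = ∫ p, G p :=
  (shear_mp a b c).integral_comp (shearEquiv a b c).measurableEmbedding G

lemma ftM_continuous (μ : Measure ℝ) [IsFiniteMeasure μ] : Continuous (ftM μ) := by
  apply continuous_of_dominated (bound := fun _ => (1 : ℝ))
  · intro ξ
    exact Continuous.aestronglyMeasurable (by fun_prop)
  · intro ξ
    filter_upwards with x
    rw [Complex.norm_exp_ofReal_mul_I]
  · exact integrable_const 1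
  · filter_upwards with x
    fun_prop

lemma ft3_continuous (f : SchwartzMap (ℝ × ℝ × ℝ) ℂ) : Continuous (ft3 ⇑f) := by
  apply continuous_of_dominated (bound := fun x => ‖f x‖)
  · intro ξ
    exact Continuous.aestronglyMeasurable (by fun_prop)
  · intro ξ
    filter_upwards with x
    rw [norm_mul, Complex.norm_exp_ofReal_mul_I, one_mul]
  · exact f.integrable.norm
  · filter_upwards with x
    fun_prop

lemma ft3_bound (f : SchwartzMap (ℝ × ℝ × ℝ) ℂ) (ξ : ℝ × ℝ × ℝ) :
    ‖ft3 ⇑f ξ‖ ≤ ∫ x : ℝ × ℝ × ℝ, ‖f x‖ := by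
  refine le_trans (norm_integral_le_integral_norm _) (le_of_eq ?_)
  refine integral_congr_ae (Filter.Eventually.of_forall fun x => ?_)
  simp only [norm_mul, Complex.norm_exp_ofReal_mul_I, one_mul]

lemma key_ineq (β R ε : ℝ) (hβ : 0 < β) (hε : 0 < ε) (hε2 : ε ≤ 2) (hR : 0 ≤ R)
    (a ξ η : ℝ) (ha : ε ≤ a) (hη : |η| ≤ R) :
    (1 + |η - a * ξ|) ^ (-β) ≤ (max (1 + 2 * R / ε) (2 / ε)) ^ β * (1 + |ξ|) ^ (-β) := by
  set L := max (1 + 2 * R / ε) (2 / ε) with hLdef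
  have hL1 : (1 : ℝ) ≤ L :=
    le_max_iff.2 (Or.inl (by nlinarith [div_nonneg (by linarith : (0:ℝ) ≤ 2*R) hε.le]))
  have hab : 0 ≤ |η - a * ξ| := abs_nonneg _
  have h1 : 1 + |ξ| ≤ L * (1 + |η - a * ξ|) := by
    rcases le_or_gt (|ξ|) (2 * R / ε) with h | h
    · calc 1 + |ξ| ≤ 1 + 2 * R / ε := by linarith
        _ ≤ L := le_max_left _ _
        _ ≤ L * (1 + |η - a * ξ|) := le_mul_of_one_le_right (by linarith) (by linarith)
    · have hRe : R < ε * |ξ| / 2 := by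
        have := (div_lt_iff₀ hε).mp h
        linarith
      have habs : ε * |ξ| - R ≤ |η - a * ξ| := by
        have h2 : |a * ξ| - |η| ≤ |η - a * ξ| := by
          rw [abs_sub_comm]; exact abs_sub_abs_le_abs_sub _ _
        have h3 : |a * ξ| = a * |ξ| := by rw [abs_mul, abs_of_pos (lt_of_lt_of_le hε ha)]
        nlinarith [abs_nonneg ξ]
      calc 1 + |ξ| = (2 / ε) * (ε / 2 * (1 + |ξ|)) := by field_simp
        _ ≤ (2 / ε) * (1 + |η - a * ξ|) := by
            refine mul_le_mul_of_nonneg_left ?_ (by positivity)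
            nlinarith
        _ ≤ L * (1 + |η - a * ξ|) := mul_le_mul_of_nonneg_right (le_max_right _ _) (by linarith)
  have hL0 : (0 : ℝ) < L := by linarith
  have hx : (0 : ℝ) < (1 + |ξ|) / L := by positivity
  have h2 : (1 + |ξ|) / L ≤ 1 + |η - a * ξ| := by
    rw [div_le_iff₀ hL0]; nlinarith
  calc (1 + |η - a * ξ|) ^ (-β) ≤ ((1 + |ξ|) / L) ^ (-β) :=
        Real.rpow_le_rpow_of_nonpos hx h2 (neg_nonpos.mpr hβ.le)
    _ = L ^ β * (1 + |ξ|) ^ (-β) := by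
        rw [Real.div_rpow (by positivity) hL0.le, Real.rpow_neg hL0.le]
        field_simp

end Stmt10Aux

open Stmt10Aux in
theorem stmt10 (μ : Measure ℝ) (hprob : IsProbabilityMeasure μ)
    (hμsupp : μ (Set.Icc (0 : ℝ) 1)ᶜ = 0)
    (C β : ℝ) (hβ : 1 / 4 < β)
    (hdecay : ∀ ξ : ℝ, ‖ftM μ ξ‖ ≤ C * (1 + |ξ|) ^ (-β))
    (f : SchwartzMap (ℝ × ℝ × ℝ) ℂ) (hfc : HasCompactSupport (ft3 ⇑f)) :
    ContinuousOn (fun st : ℝ × ℝ =>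
      ∫ p : ℝ × ℝ × ℝ × ℝ,
        ftM μ p.1 * ftM μ p.2.1 * ftM μ p.2.2.1 * ftM μ p.2.2.2 *
          ft3 ⇑f (-p.2.1 - st.1 / (1 - st.2) * p.1,
            -p.2.2.1 - (1 - st.1) / (1 - st.2) * p.1,
            -p.2.2.2 + st.2 / (1 - st.2) * p.1))
      (Set.Ioo (0 : ℝ) 1 ×ˢ Set.Ioo (0 : ℝ) 1) := by
  have hβ0 : (0 : ℝ) < β := by linarith
  have hC0 : 0 ≤ C := le_trans (norm_nonneg (ftM μ 0)) (by simpa using hdecay 0)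
  have hμc : Continuous (ftM μ) := ftM_continuous μ
  have hfcont : Continuous (ft3 ⇑f) := ft3_continuous f
  obtain ⟨R, hR0, hRsupp⟩ : ∃ R : ℝ, 0 ≤ R ∧ ∀ q : ℝ × ℝ × ℝ, R < ‖q‖ → ft3 ⇑f q = 0 := by
    obtain ⟨R, hR⟩ := hfc.isBounded.subset_closedBall 0
    refine ⟨max R 0, le_max_right _ _, fun q hq => ?_⟩
    apply image_eq_zero_of_notMem_tsupport
    intro hmem
    have h1 := hR hmem
    rw [Metric.mem_closedBall, dist_zero_right] at h1
    exact absurd (le_trans h1 (le_max_left _ _)) (not_le.mpr hq)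
  set Df := ∫ x : ℝ × ℝ × ℝ, ‖f x‖ with hDf
  have hDf0 : 0 ≤ Df := integral_nonneg fun x => norm_nonneg _
  -- the sheared version of the integral
  set F' : ℝ × ℝ → ℂ := fun st =>
    ∫ p : ℝ × ℝ × ℝ × ℝ,
      ftM μ p.1 * ftM μ (p.2.1 - st.1 / (1 - st.2) * p.1) *
        ftM μ (p.2.2.1 - (1 - st.1) / (1 - st.2) * p.1) *
        ftM μ (p.2.2.2 + st.2 / (1 - st.2) * p.1) *
        ft3 ⇑f (-p.2.1, -p.2.2.1, -p.2.2.2) with hF'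
  have heqOn : ∀ st : ℝ × ℝ, (∫ p : ℝ × ℝ × ℝ × ℝ,
      ftM μ p.1 * ftM μ p.2.1 * ftM μ p.2.2.1 * ftM μ p.2.2.2 *
        ft3 ⇑f (-p.2.1 - st.1 / (1 - st.2) * p.1,
          -p.2.2.1 - (1 - st.1) / (1 - st.2) * p.1,
          -p.2.2.2 + st.2 / (1 - st.2) * p.1)) = F' st := by
    intro st
    rw [hF']
    beta_reduce
    rw [← integral_shear (st.1 / (1 - st.2)) ((1 - st.1) / (1 - st.2)) (-(st.2 / (1 - st.2)))
      (fun p : ℝ × ℝ × ℝ × ℝ =>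
        ftM μ p.1 * ftM μ (p.2.1 - st.1 / (1 - st.2) * p.1) *
          ftM μ (p.2.2.1 - (1 - st.1) / (1 - st.2) * p.1) *
          ftM μ (p.2.2.2 + st.2 / (1 - st.2) * p.1) *
          ft3 ⇑f (-p.2.1, -p.2.2.1, -p.2.2.2))]
    refine integral_congr_ae (Filter.Eventually.of_forall fun p => ?_)
    simp only
    have e1 : p.2.1 + st.1 / (1 - st.2) * p.1 - st.1 / (1 - st.2) * p.1 = p.2.1 := by ring
    have e2 : p.2.2.1 + (1 - st.1) / (1 - st.2) * p.1 - (1 - st.1) / (1 - st.2) * p.1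
        = p.2.2.1 := by ring
    have e3 : p.2.2.2 + -(st.2 / (1 - st.2)) * p.1 + st.2 / (1 - st.2) * p.1 = p.2.2.2 := by ring
    rw [e1, e2, e3]
    have e4 : ((-p.2.1 - st.1 / (1 - st.2) * p.1, -p.2.2.1 - (1 - st.1) / (1 - st.2) * p.1,
        -p.2.2.2 + st.2 / (1 - st.2) * p.1) : ℝ × ℝ × ℝ)
        = (-(p.2.1 + st.1 / (1 - st.2) * p.1), -(p.2.2.1 + (1 - st.1) / (1 - st.2) * p.1),
          -(p.2.2.2 + -(st.2 / (1 - st.2)) * p.1)) := by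
      simp only [Prod.mk.injEq]
      refine ⟨by ring, by ring, by ring⟩
    rw [e4]
  refine ContinuousOn.congr ?_ fun st _ => heqOn st
  intro st₀ hst₀
  refine (?_ : ContinuousAt F' st₀).continuousWithinAt
  obtain ⟨hs₀, ht₀⟩ := hst₀
  rw [Set.mem_Ioo] at hs₀ ht₀
  obtain ⟨ε, hε, he1, he2, he3, he4⟩ : ∃ ε : ℝ, 0 < ε ∧ ε ≤ st₀.1 / 2 ∧
      ε ≤ (1 - st₀.1) / 2 ∧ ε ≤ st₀.2 / 2 ∧ ε ≤ (1 - st₀.2) / 2 := by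
    refine ⟨min (min st₀.1 (1 - st₀.1)) (min st₀.2 (1 - st₀.2)) / 2, ?_, ?_, ?_, ?_, ?_⟩
    · have := lt_min (lt_min hs₀.1 (by linarith : (0:ℝ) < 1 - st₀.1))
        (lt_min ht₀.1 (by linarith : (0:ℝ) < 1 - st₀.2))
      linarith
    · have h1 := min_le_left (min st₀.1 (1 - st₀.1)) (min st₀.2 (1 - st₀.2))
      have h2 := min_le_left st₀.1 (1 - st₀.1)
      linarith
    · have h1 := min_le_left (min st₀.1 (1 - st₀.1)) (min st₀.2 (1 - st₀.2))
      have h2 := min_le_right st₀.1 (1 - st₀.1)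
      linarith
    · have h1 := min_le_right (min st₀.1 (1 - st₀.1)) (min st₀.2 (1 - st₀.2))
      have h2 := min_le_left st₀.2 (1 - st₀.2)
      linarith
    · have h1 := min_le_right (min st₀.1 (1 - st₀.1)) (min st₀.2 (1 - st₀.2))
      have h2 := min_le_right st₀.2 (1 - st₀.2)
      linarith
  have hε2 : ε ≤ 2 := by linarith
  obtain ⟨L, hL0, hLkey⟩ : ∃ L : ℝ, 0 < L ∧ ∀ a ξ η : ℝ, ε ≤ a → |η| ≤ R →
      (1 + |η - a * ξ|) ^ (-β) ≤ L ^ β * (1 + |ξ|) ^ (-β) :=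
    ⟨max (1 + 2 * R / ε) (2 / ε), lt_max_iff.2 (Or.inr (by positivity)),
      fun a ξ η ha hη => key_ineq β R ε hβ0 hε hε2 hR0 a ξ η ha hη⟩
  have hLβ : (0 : ℝ) ≤ L ^ β := Real.rpow_nonneg hL0.le β
  set K := C ^ 4 * (L ^ β) ^ 3 * Df with hK
  rw [hF']
  apply continuousAt_of_dominated (bound := fun p : ℝ × ℝ × ℝ × ℝ =>
    (K * (1 + |p.1|) ^ (-(4 * β))) *
      Set.indicator (Metric.closedBall (0 : ℝ × ℝ × ℝ) R) (fun _ => (1 : ℝ)) p.2)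
  · filter_upwards with st
    apply Continuous.aestronglyMeasurable
    fun_prop
  · filter_upwards [Metric.ball_mem_nhds st₀ hε] with st hst
    filter_upwards with p
    have hd := Metric.mem_ball.mp hst
    rw [Prod.dist_eq, max_lt_iff, Real.dist_eq, Real.dist_eq] at hd
    obtain ⟨hd1, hd2⟩ := hd
    rw [abs_sub_lt_iff] at hd1 hd2
    have hts : 0 < 1 - st.2 := by linarith
    have hts1 : 1 - st.2 ≤ 1 := by linarith
    have ha : ε ≤ st.1 / (1 - st.2) := by
      rw [le_div_iff₀ hts]; nlinarith
    have hb : ε ≤ (1 - st.1) / (1 - st.2) := by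
      rw [le_div_iff₀ hts]; nlinarith
    have hc : ε ≤ st.2 / (1 - st.2) := by
      rw [le_div_iff₀ hts]; nlinarith
    by_cases hp : p.2 ∈ Metric.closedBall (0 : ℝ × ℝ × ℝ) R
    · rw [Set.indicator_of_mem hp]
      have hηnorm : ‖p.2‖ ≤ R := by
        rwa [Metric.mem_closedBall, dist_zero_right] at hp
      have hη1 : |p.2.1| ≤ R := le_trans (norm_fst_le p.2) hηnorm
      have hη2 : |p.2.2.1| ≤ R := le_trans (le_trans (norm_fst_le p.2.2) (norm_snd_le p.2)) hηnorm
      have hη3 : |p.2.2.2| ≤ R := le_trans (le_trans (norm_snd_le p.2.2) (norm_snd_le p.2)) hηnorm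
      have b1 := hdecay p.1
      have b2 : ‖ftM μ (p.2.1 - st.1 / (1 - st.2) * p.1)‖
          ≤ C * (L ^ β * (1 + |p.1|) ^ (-β)) :=
        le_trans (hdecay _) (mul_le_mul_of_nonneg_left
          (hLkey _ p.1 p.2.1 ha hη1) hC0)
      have b3 : ‖ftM μ (p.2.2.1 - (1 - st.1) / (1 - st.2) * p.1)‖
          ≤ C * (L ^ β * (1 + |p.1|) ^ (-β)) :=
        le_trans (hdecay _) (mul_le_mul_of_nonneg_left
          (hLkey _ p.1 p.2.2.1 hb hη2) hC0)
      have b4 : ‖ftM μ (p.2.2.2 + st.2 / (1 - st.2) * p.1)‖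
          ≤ C * (L ^ β * (1 + |p.1|) ^ (-β)) := by
        have e : p.2.2.2 + st.2 / (1 - st.2) * p.1
            = p.2.2.2 - st.2 / (1 - st.2) * (-p.1) := by ring
        have h := hLkey _ (-p.1) p.2.2.2 hc hη3
        rw [abs_neg] at h
        rw [e]
        exact le_trans (hdecay _) (mul_le_mul_of_nonneg_left h hC0)
      have b5 : ‖ft3 ⇑f (-p.2.1, -p.2.2.1, -p.2.2.2)‖ ≤ Df := ft3_bound f _
      have hx4 : ((1 + |p.1|) ^ (-β)) ^ (4 : ℕ) = (1 + |p.1|) ^ (-(4 * β)) := by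
        rw [← Real.rpow_natCast ((1 + |p.1|) ^ (-β)) 4,
          ← Real.rpow_mul (by positivity)]
        norm_num [mul_comm]
      have hrp : (0:ℝ) ≤ (1 + |p.1|) ^ (-β) := by positivity
      calc ‖ftM μ p.1 * ftM μ (p.2.1 - st.1 / (1 - st.2) * p.1) *
            ftM μ (p.2.2.1 - (1 - st.1) / (1 - st.2) * p.1) *
            ftM μ (p.2.2.2 + st.2 / (1 - st.2) * p.1) *
            ft3 ⇑f (-p.2.1, -p.2.2.1, -p.2.2.2)‖
          = ‖ftM μ p.1‖ * ‖ftM μ (p.2.1 - st.1 / (1 - st.2) * p.1)‖ *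
            ‖ftM μ (p.2.2.1 - (1 - st.1) / (1 - st.2) * p.1)‖ *
            ‖ftM μ (p.2.2.2 + st.2 / (1 - st.2) * p.1)‖ *
            ‖ft3 ⇑f (-p.2.1, -p.2.2.1, -p.2.2.2)‖ := by
            simp only [norm_mul]
        _ ≤ (C * (1 + |p.1|) ^ (-β)) * (C * (L ^ β * (1 + |p.1|) ^ (-β))) *
            (C * (L ^ β * (1 + |p.1|) ^ (-β))) * (C * (L ^ β * (1 + |p.1|) ^ (-β))) * Df := by
            have hA0 : 0 ≤ C * (1 + |p.1|) ^ (-β) := mul_nonneg hC0 hrp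
            have hB0 : 0 ≤ C * (L ^ β * (1 + |p.1|) ^ (-β)) :=
              mul_nonneg hC0 (mul_nonneg hLβ hrp)
            have m1 := mul_le_mul b1 b2 (norm_nonneg _) hA0
            have m2 := mul_le_mul m1 b3 (norm_nonneg _) (mul_nonneg hA0 hB0)
            have m3 := mul_le_mul m2 b4 (norm_nonneg _) (mul_nonneg (mul_nonneg hA0 hB0) hB0)
            exact mul_le_mul m3 b5 (norm_nonneg _)
              (mul_nonneg (mul_nonneg (mul_nonneg hA0 hB0) hB0) hB0)
        _ = (K * (1 + |p.1|) ^ (-(4 * β))) * 1 := by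
            rw [hK, ← hx4]; ring
    · rw [Set.indicator_of_notMem hp]
      have hz : ft3 ⇑f (-p.2.1, -p.2.2.1, -p.2.2.2) = 0 := by
        apply hRsupp
        have e : ((-p.2.1, -p.2.2.1, -p.2.2.2) : ℝ × ℝ × ℝ) = -p.2 := rfl
        rw [e, norm_neg]
        rw [Metric.mem_closedBall, dist_zero_right, not_le] at hp
        exact hp
      rw [hz, mul_zero, norm_zero, mul_zero]
  · rw [Measure.volume_eq_prod]
    refine (Integrable.mul_prod (μ := (volume : Measure ℝ)) (ν := (volume : Measure (ℝ × ℝ × ℝ)))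
      (f := fun x : ℝ => K * (1 + |x|) ^ (-(4 * β)))
      (g := fun y : ℝ × ℝ × ℝ =>
        Set.indicator (Metric.closedBall (0 : ℝ × ℝ × ℝ) R) (fun _ => (1 : ℝ)) y) ?_ ?_ : _)
    · have h : Integrable (fun x : ℝ => (1 + ‖x‖) ^ (-(4 * β))) volume :=
        integrable_one_add_norm (by simpa using (by linarith : (1:ℝ) < 4 * β))
      exact (h.const_mul K).congr (Filter.Eventually.of_forall fun x => by
        simp [Real.norm_eq_abs])
    · rw [integrable_indicator_iff measurableSet_closedBall]
      exact integrableOn_const measure_closedBall_lt_top.ne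
  · filter_upwards with p
    have h1t : (1 : ℝ) - st₀.2 ≠ 0 := by
      intro h; nlinarith [ht₀.2]
    have hA : ContinuousAt (fun st : ℝ × ℝ => st.1 / (1 - st.2)) st₀ :=
      continuousAt_fst.div (continuousAt_const.sub continuousAt_snd) h1t
    have hB : ContinuousAt (fun st : ℝ × ℝ => (1 - st.1) / (1 - st.2)) st₀ :=
      (continuousAt_const.sub continuousAt_fst).div
        (continuousAt_const.sub continuousAt_snd) h1t
    have hCc : ContinuousAt (fun st : ℝ × ℝ => st.2 / (1 - st.2)) st₀ :=
      continuousAt_snd.div (continuousAt_const.sub continuousAt_snd) h1t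
    have c1 : ContinuousAt (fun st : ℝ × ℝ =>
        ftM μ (p.2.1 - st.1 / (1 - st.2) * p.1)) st₀ :=
      hμc.continuousAt.comp (continuousAt_const.sub (hA.mul continuousAt_const))
    have c2 : ContinuousAt (fun st : ℝ × ℝ =>
        ftM μ (p.2.2.1 - (1 - st.1) / (1 - st.2) * p.1)) st₀ :=
      hμc.continuousAt.comp (continuousAt_const.sub (hB.mul continuousAt_const))
    have c3 : ContinuousAt (fun st : ℝ × ℝ =>
        ftM μ (p.2.2.2 + st.2 / (1 - st.2) * p.1)) st₀ :=
      hμc.continuousAt.comp (continuousAt_const.add (hCc.mul continuousAt_const))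
    exact (((continuousAt_const.mul c1).mul c2).mul c3).mul continuousAt_const
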